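/- The fields ℚ[X]/(X³ - X + 1) and ℚ[X]/(X³ - 3X + 25) are isomorphic as fields. -/

import Mathlib

open Polynomial

noncomputable section StmtAux

private lemma two_eq_zero : (2 : (ZMod 2)[X]) = 0 := by
  have : ((2:ℕ) : (ZMod 2)[X]) = ((0:ℕ) : (ZMod 2)[X]) := by
    rw [← map_natCast (C : ZMod 2 →+* _), ← map_natCast (C : ZMod 2 →+* _)]
    exact congrArg C (by decide)
  simpa using this

private lemma cubic_mod2_irred : Irreducible (X^3 + X + 1 : (ZMod 2)[X]) := by
  have hmon : (X^3 + X + 1 : (ZMod 2)[X]).Monic := by monicity!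
  have hdeg : (X^3 + X + 1 : (ZMod 2)[X]).natDegree = 3 := by compute_degree!
  rw [hmon.irreducible_iff_roots_eq_zero_of_degree_le_three (by omega) (by omega)]
  rw [Multiset.eq_zero_iff_forall_notMem]
  intro a ha
  rw [mem_roots hmon.ne_zero] at ha
  have h : a^3 + a + 1 = 0 := by simpa [IsRoot] using ha
  have hnr : ∀ b : ZMod 2, b^3 + b + 1 ≠ 0 := by decide
  exact hnr a h

/-- A monic integer cubic whose reduction mod 2 is `X³+X+1` is irreducible over `ℚ`. -/
private lemma irr_of_cubic (p : ℤ[X]) (hm : p.Monic)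
    (hmap : p.map (Int.castRingHom (ZMod 2)) = X^3 + X + 1) :
    Irreducible (p.map (Int.castRingHom ℚ)) := by
  have h2 : Irreducible (p.map (Int.castRingHom (ZMod 2))) := hmap ▸ cubic_mod2_irred
  have hZ : Irreducible p := hm.irreducible_of_irreducible_map _ _ h2
  rw [← IsPrimitive.Int.irreducible_iff_irreducible_map_cast hm.isPrimitive]
  exact hZ

private lemma irrP : Irreducible (X^3 - X + 1 : ℚ[X]) := by
  have := irr_of_cubic (X^3 - X + 1) (by monicity!) (by
    push_cast [Polynomial.map_add, Polynomial.map_sub, Polynomial.map_pow, Polynomial.map_one,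
      Polynomial.map_X]
    linear_combination (-X : (ZMod 2)[X]) * two_eq_zero)
  simpa [Polynomial.map_add, Polynomial.map_sub, Polynomial.map_pow, Polynomial.map_one,
    Polynomial.map_X] using this

private lemma irrQ : Irreducible (X^3 - 3*X + 25 : ℚ[X]) := by
  have := irr_of_cubic (X^3 - 3*X + 25) (by monicity!) (by
    push_cast [Polynomial.map_add, Polynomial.map_sub, Polynomial.map_pow, Polynomial.map_mul,
      Polynomial.map_ofNat, Polynomial.map_X]
    linear_combination (12 - 2*X : (ZMod 2)[X]) * two_eq_zero)
  simpa [Polynomial.map_add, Polynomial.map_sub, Polynomial.map_pow, Polynomial.map_mul,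
    Polynomial.map_ofNat, Polynomial.map_X] using this

private def P : ℚ[X] := X^3 - X + 1
private def Q : ℚ[X] := X^3 - 3*X + 25

private instance factP : Fact (Irreducible P) := ⟨irrP⟩
private instance factQ : Fact (Irreducible Q) := ⟨irrQ⟩

private lemma hP : (AdjoinRoot.root P)^3 - AdjoinRoot.root P + 1 = 0 := by
  have h0 : AdjoinRoot.mk P (X^3 - X + 1) = 0 := AdjoinRoot.mk_self
  simpa using h0

private lemma hQ : (AdjoinRoot.root Q)^3 - 3 * AdjoinRoot.root Q + 25 = 0 := by
  have h0 : AdjoinRoot.mk Q (X^3 - 3*X + 25) = 0 := AdjoinRoot.mk_self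
  simpa [map_ofNat] using h0

private lemma haux1 :
    aeval (-3 * (AdjoinRoot.root P)^2 + 2 : AdjoinRoot P) Q = 0 := by
  set α := AdjoinRoot.root P
  have h := hP
  simp only [Q, map_add, map_sub, map_pow, map_mul, aeval_X, map_ofNat]
  linear_combination (27 + 27*α - 27*α^3) * h

private lemma haux2 :
    aeval ((-(AdjoinRoot.root Q)^2 + AdjoinRoot.root Q + 2) / 9 : AdjoinRoot Q) P = 0 := by
  set β := AdjoinRoot.root Q
  have h := hQ
  simp only [P, map_add, map_sub, map_pow, map_one, aeval_X]
  linear_combination ((23 + 3*β^2 - β^3)/729) * h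

private def φ : AdjoinRoot Q →ₐ[ℚ] AdjoinRoot P :=
  AdjoinRoot.liftAlgHom Q (Algebra.ofId ℚ _) (-3 * (AdjoinRoot.root P)^2 + 2) haux1

private def ψ : AdjoinRoot P →ₐ[ℚ] AdjoinRoot Q :=
  AdjoinRoot.liftAlgHom P (Algebra.ofId ℚ _) ((-(AdjoinRoot.root Q)^2 + AdjoinRoot.root Q + 2) / 9) haux2

private lemma comp1 : φ.comp ψ = AlgHom.id ℚ (AdjoinRoot P) := by
  apply AdjoinRoot.algHom_ext
  show φ (ψ (AdjoinRoot.root P)) = AdjoinRoot.root P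
  have e1 : ψ (AdjoinRoot.root P) = (-(AdjoinRoot.root Q)^2 + AdjoinRoot.root Q + 2) / 9 :=
    AdjoinRoot.liftAlgHom_root _ _ _ _
  have e2 : φ (AdjoinRoot.root Q) = -3 * (AdjoinRoot.root P)^2 + 2 :=
    AdjoinRoot.liftAlgHom_root _ _ _ _
  rw [e1]
  simp only [e2, AlgHom.comp_apply, AlgHom.id_apply, AdjoinRoot.liftAlgHom_root,
    map_div₀, map_add, map_neg, map_mul, map_pow, map_ofNat]
  set α := AdjoinRoot.root P
  have h := hP
  linear_combination (-α) * h

private lemma comp2 : ψ.comp φ = AlgHom.id ℚ (AdjoinRoot Q) := by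
  apply AdjoinRoot.algHom_ext
  show ψ (φ (AdjoinRoot.root Q)) = AdjoinRoot.root Q
  have e1 : ψ (AdjoinRoot.root P) = (-(AdjoinRoot.root Q)^2 + AdjoinRoot.root Q + 2) / 9 :=
    AdjoinRoot.liftAlgHom_root _ _ _ _
  have e2 : φ (AdjoinRoot.root Q) = -3 * (AdjoinRoot.root P)^2 + 2 :=
    AdjoinRoot.liftAlgHom_root _ _ _ _
  rw [e2]
  simp only [e1, AlgHom.comp_apply, AlgHom.id_apply, AdjoinRoot.liftAlgHom_root,
    map_div₀, map_add, map_neg, map_mul, map_pow, map_ofNat]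
  set β := AdjoinRoot.root Q
  have h := hQ
  linear_combination ((2 - β)/27) * h

end StmtAux

/-- The fields `ℚ[X]/(X³ - X + 1)` and `ℚ[X]/(X³ - 3X + 25)` are isomorphic. -/
theorem stmt_6 :
    Nonempty (AdjoinRoot (X^3 - X + 1 : ℚ[X]) ≃+* AdjoinRoot (X^3 - 3*X + 25 : ℚ[X])) := by
  exact ⟨(AlgEquiv.ofAlgHom ψ φ comp2 comp1).toRingEquiv⟩
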